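/- Let H be a complex Hilbert space, A a positive bounded operator, T, S bounded operators admitting A-adjoints. Then w_A(T+S)² ≤ (1/2)( ‖T^♯T + S^♯S‖_A + ‖T^♯T − S^♯S‖_A ) + √(w_A(T^♯T) · w_A(S^♯S)) + 2 w_A(S^♯T). -/

import Mathlib

open scoped InnerProductSpace

set_option linter.unusedSectionVars false
set_option linter.unusedVariables false
set_option linter.deprecated false
set_option maxHeartbeats 1000000

variable {H : Type*} [NormedAddCommGroup H] [InnerProductSpace ℂ H] [CompleteSpace H]

/-- The `A`-semi-inner product `⟪x, y⟫_A = ⟪A x, y⟫`. -/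
noncomputable def ipA (A : H →L[ℂ] H) (x y : H) : ℂ := ⟪A x, y⟫_ℂ

/-- The `A`-semi-norm `‖x‖_A = √(re ⟪A x, x⟫)`. -/
noncomputable def nA (A : H →L[ℂ] H) (x : H) : ℝ := Real.sqrt (ipA A x x).re

section
variable (A : H →L[ℂ] H)

lemma ipA_conj (hA : A.IsPositive) (x y : H) : (starRingEnd ℂ) (ipA A y x) = ipA A x y := by
  have hs := (ContinuousLinearMap.isSelfAdjoint_iff_isSymmetric.mp hA.isSelfAdjoint) x y
  unfold ipA
  rw [inner_conj_symm]
  exact hs.symm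

lemma ipA_self_nonneg (hA : A.IsPositive) (x : H) : 0 ≤ (ipA A x x).re := by
  have := hA.2 x
  simpa [ContinuousLinearMap.reApplyInnerSelf, ipA] using this

lemma ipA_self_real (hA : A.IsPositive) (x : H) : ipA A x x = ((ipA A x x).re : ℂ) := by
  have h := ipA_conj A hA x x
  have him : (ipA A x x).im = 0 := by
    have := congrArg Complex.im h
    simp at this
    linarith
  exact Complex.ext (by simp) (by simp [him])

noncomputable def coreA (hA : A.IsPositive) : PreInnerProductSpace.Core ℂ H where
  inner := ipA A
  conj_inner_symm := ipA_conj A hA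
  re_inner_nonneg := ipA_self_nonneg A hA
  add_left := fun x y z => by simp [ipA, inner_add_left]
  smul_left := fun x y r => by simp [ipA, inner_smul_left]; ring

lemma nA_nonneg (x : H) : 0 ≤ nA A x := Real.sqrt_nonneg _

lemma nA_sq (hA : A.IsPositive) (x : H) : nA A x ^ 2 = (ipA A x x).re :=
  Real.sq_sqrt (ipA_self_nonneg A hA x)

lemma abs_ipA_le (hA : A.IsPositive) (x y : H) :
    ‖ipA A x y‖ ≤ nA A x * nA A y := by
  have h : ‖ipA A x y‖ * ‖ipA A y x‖ ≤ (ipA A x x).re * (ipA A y y).re :=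
    @InnerProductSpace.Core.inner_mul_inner_self_le ℂ H _ _ _ (coreA A hA) x y
  have hxy : ‖ipA A y x‖ = ‖ipA A x y‖ := by
    rw [← ipA_conj A hA x y]
    simp
  rw [hxy] at h
  have h2 := Real.sqrt_le_sqrt h
  rw [Real.sqrt_mul_self (norm_nonneg _)] at h2
  unfold nA
  rw [← Real.sqrt_mul (ipA_self_nonneg A hA x)]
  exact h2

lemma nA_le_norm (hA : A.IsPositive) (y : H) : nA A y ≤ Real.sqrt ‖A‖ * ‖y‖ := by
  have h1 : (ipA A y y).re ≤ ‖A‖ * (‖y‖ * ‖y‖) := by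
    calc (ipA A y y).re ≤ ‖ipA A y y‖ := Complex.re_le_norm _
    _ = ‖⟪A y, y⟫_ℂ‖ := by rfl
    _ ≤ ‖A y‖ * ‖y‖ := norm_inner_le_norm _ _
    _ ≤ (‖A‖ * ‖y‖) * ‖y‖ := by
        have := A.le_opNorm y
        have h0 : (0:ℝ) ≤ ‖y‖ := norm_nonneg _
        nlinarith
    _ = ‖A‖ * (‖y‖ * ‖y‖) := by ring
  calc nA A y ≤ Real.sqrt (‖A‖ * (‖y‖ * ‖y‖)) := Real.sqrt_le_sqrt h1
  _ = Real.sqrt ‖A‖ * ‖y‖ := by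
      rw [Real.sqrt_mul (norm_nonneg A), Real.sqrt_mul_self (norm_nonneg y)]

lemma pow_apply_norm_le (Q : H →L[ℂ] H) (k : ℕ) (x : H) : ‖(Q ^ k) x‖ ≤ ‖Q‖ ^ k * ‖x‖ := by
  induction k with
  | zero => simp
  | succ n ih =>
    have h1 : (Q ^ (n+1)) x = Q ((Q ^ n) x) := by
      rw [pow_succ', ContinuousLinearMap.mul_apply]
    rw [h1]
    calc ‖Q ((Q ^ n) x)‖ ≤ ‖Q‖ * ‖(Q ^ n) x‖ := Q.le_opNorm _
    _ ≤ ‖Q‖ * (‖Q‖ ^ n * ‖x‖) := mul_le_mul_of_nonneg_left ih (norm_nonneg Q)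
    _ = ‖Q‖ ^ (n+1) * ‖x‖ := by ring

lemma ipA_pow_symm (Q : H →L[ℂ] H) (hQ : ∀ x y, ipA A (Q x) y = ipA A x (Q y)) :
    ∀ (n : ℕ) (x y : H), ipA A ((Q ^ n) x) y = ipA A x ((Q ^ n) y) := by
  intro n
  induction n with
  | zero => intro x y; simp
  | succ n ih =>
    intro x y
    have h1 : (Q ^ (n+1)) x = (Q ^ n) (Q x) := by
      rw [pow_succ, ContinuousLinearMap.mul_apply]
    have h2 : Q ((Q ^ n) y) = (Q ^ (n+1)) y := by
      rw [pow_succ', ContinuousLinearMap.mul_apply]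
    rw [h1, ih (Q x) y, hQ, h2]

lemma selfadj_abs_le (hA : A.IsPositive) (Q : H →L[ℂ] H)
    (hQ : ∀ x y, ipA A (Q x) y = ipA A x (Q y)) (x : H) (hx : nA A x = 1) :
    ‖ipA A (Q x) x‖ ≤ ‖Q‖ := by
  have hx1 : (ipA A x x).re = 1 := Real.sqrt_eq_one.mp hx
  set c : ℝ := Real.sqrt ‖A‖ * ‖x‖ with hc
  set g : ℕ → ℝ := fun n => nA A ((Q ^ (2 ^ n)) x) with hg
  have hgb : ∀ n, g n ≤ c * ‖Q‖ ^ (2 ^ n) := by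
    intro n
    calc g n ≤ Real.sqrt ‖A‖ * ‖(Q ^ (2 ^ n)) x‖ := nA_le_norm A hA _
    _ ≤ Real.sqrt ‖A‖ * (‖Q‖ ^ (2 ^ n) * ‖x‖) :=
        mul_le_mul_of_nonneg_left (pow_apply_norm_le Q _ x) (Real.sqrt_nonneg _)
    _ = c * ‖Q‖ ^ (2 ^ n) := by rw [hc]; ring
  have hgsq : ∀ n, g n ^ 2 ≤ g (n + 1) := by
    intro n
    have hmm : (2:ℕ) ^ (n+1) = 2 ^ n + 2 ^ n := by rw [pow_succ, Nat.mul_two]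
    have key : ipA A ((Q ^ (2 ^ n)) x) ((Q ^ (2 ^ n)) x) = ipA A x ((Q ^ (2 ^ (n+1))) x) := by
      rw [ipA_pow_symm A Q hQ (2 ^ n) x]
      congr 1
      rw [← ContinuousLinearMap.mul_apply, ← pow_add, ← hmm]
    calc g n ^ 2 = (ipA A ((Q ^ (2 ^ n)) x) ((Q ^ (2 ^ n)) x)).re := nA_sq A hA _
    _ = (ipA A x ((Q ^ (2 ^ (n+1))) x)).re := by rw [key]
    _ ≤ ‖ipA A x ((Q ^ (2 ^ (n+1))) x)‖ := Complex.re_le_norm _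
    _ ≤ nA A x * nA A ((Q ^ (2 ^ (n+1))) x) := abs_ipA_le A hA _ _
    _ = g (n+1) := by rw [hx, one_mul]
  have hgiter : ∀ n, g 0 ^ (2 ^ n) ≤ g n := by
    intro n
    induction n with
    | zero => simp
    | succ n ih =>
      have h1 : g 0 ^ (2 ^ (n+1)) = (g 0 ^ (2 ^ n)) ^ 2 := by
        rw [← pow_mul, pow_succ]
      rw [h1]
      calc (g 0 ^ (2 ^ n)) ^ 2 ≤ g n ^ 2 :=
          pow_le_pow_left₀ (pow_nonneg (nA_nonneg A _) _) ih 2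
      _ ≤ g (n+1) := hgsq n
  have hg0 : g 0 = nA A (Q x) := by simp [hg]
  have key : nA A (Q x) ≤ ‖Q‖ := by
    rw [← hg0]
    by_contra hcon
    push_neg at hcon
    rcases eq_or_lt_of_le (norm_nonneg Q) with h0 | h0
    · have h1 := hgb 0
      rw [← h0] at h1 hcon
      simp at h1
      linarith
    · have hr1 : 1 < g 0 / ‖Q‖ := (one_lt_div h0).mpr hcon
      have hrc : ∀ n, (g 0 / ‖Q‖) ^ (2 ^ n) ≤ c := by
        intro n
        rw [div_pow, div_le_iff₀ (pow_pos h0 _)]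
        exact (hgiter n).trans (hgb n)
      obtain ⟨n, hn⟩ := pow_unbounded_of_one_lt c hr1
      have h2 : (g 0 / ‖Q‖) ^ n ≤ (g 0 / ‖Q‖) ^ (2 ^ n) :=
        pow_le_pow_right₀ hr1.le (Nat.le_of_lt (Nat.lt_two_pow_self))
      have := hrc n
      linarith
  calc ‖ipA A (Q x) x‖ ≤ nA A (Q x) * nA A x := abs_ipA_le A hA _ _
  _ = nA A (Q x) := by rw [hx, mul_one]
  _ ≤ ‖Q‖ := key

lemma ipA_adj_rev (hA : A.IsPositive) (R Rs : H →L[ℂ] H)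
    (h : ∀ x y, ipA A (R x) y = ipA A x (Rs y)) (x y : H) :
    ipA A (Rs x) y = ipA A x (R y) := by
  rw [← ipA_conj A hA (Rs x) y, ← h y x, ipA_conj A hA x (R y)]

lemma comp_selfadj (hA : A.IsPositive) (R Rs : H →L[ℂ] H)
    (h : ∀ x y, ipA A (R x) y = ipA A x (Rs y)) (a b : H) :
    ipA A ((Rs ∘L R) a) b = ipA A a ((Rs ∘L R) b) := by
  simp only [ContinuousLinearMap.comp_apply]
  rw [ipA_adj_rev A hA R Rs h (R a) b, ← h a (R b)]

lemma nA_comp_le (hA : A.IsPositive) (R Rs : H →L[ℂ] H)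
    (h : ∀ x y, ipA A (R x) y = ipA A x (Rs y)) (x : H) (hx : nA A x = 1) :
    nA A (R x) ≤ Real.sqrt ‖Rs ∘L R‖ := by
  have hsq : nA A (R x) ^ 2 ≤ ‖Rs ∘L R‖ := by
    have e : ipA A (R x) (R x) = ipA A ((Rs ∘L R) x) x := by
      simp only [ContinuousLinearMap.comp_apply]
      rw [ipA_adj_rev A hA R Rs h (R x) x]
    calc nA A (R x) ^ 2 = (ipA A (R x) (R x)).re := nA_sq A hA _
    _ = (ipA A ((Rs ∘L R) x) x).re := by rw [e]
    _ ≤ ‖ipA A ((Rs ∘L R) x) x‖ := Complex.re_le_norm _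
    _ ≤ ‖Rs ∘L R‖ := selfadj_abs_le A hA _ (comp_selfadj A hA R Rs h) x hx
  calc nA A (R x) = Real.sqrt (nA A (R x) ^ 2) := (Real.sqrt_sq (nA_nonneg A _)).symm
  _ ≤ Real.sqrt ‖Rs ∘L R‖ := Real.sqrt_le_sqrt hsq

lemma abs_ipA_apply_le (hA : A.IsPositive) (R Rs : H →L[ℂ] H)
    (h : ∀ x y, ipA A (R x) y = ipA A x (Rs y)) (x : H) (hx : nA A x = 1) :
    ‖ipA A (R x) x‖ ≤ Real.sqrt ‖Rs ∘L R‖ := by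
  calc ‖ipA A (R x) x‖ ≤ nA A (R x) * nA A x := abs_ipA_le A hA _ _
  _ = nA A (R x) := by rw [hx, mul_one]
  _ ≤ Real.sqrt ‖Rs ∘L R‖ := nA_comp_le A hA R Rs h x hx
lemma ipA_smul_sub_right (a : H) (s : ℂ) (x b : H) :
    ipA A a (s • x - b) = s * ipA A a x - ipA A a b := by
  simp [ipA, inner_sub_right, inner_smul_right]

lemma ipA_add_smul_left (s t : ℂ) (a b y : H) :
    ipA A (s • a + t • b) y =
      (starRingEnd ℂ) s * ipA A a y + (starRingEnd ℂ) t * ipA A b y := by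
  simp [ipA, map_add, map_smul, inner_add_left, inner_smul_left]; ring

lemma normSq_conj_mul (z : ℂ) : (starRingEnd ℂ) z * z = ((‖z‖ ^ 2 : ℝ) : ℂ) := by
  rw [← Complex.normSq_eq_conj_mul_self]
  norm_cast
  exact (Complex.sq_norm z).symm

lemma buzano (hA : A.IsPositive) (a b x : H) (hx : nA A x = 1) :
    2 * (‖ipA A a x‖ * ‖ipA A b x‖) ≤
      nA A a * nA A b + ‖ipA A a b‖ := by
  have hx1 : (ipA A x x).re = 1 := Real.sqrt_eq_one.mp hx
  have hxx : ipA A x x = 1 := by rw [ipA_self_real A hA, hx1]; norm_num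
  set s : ℂ := ipA A x b with hs
  set v : H := ((2:ℂ) * s) • x - b with hv
  have hbx : ipA A b x = (starRingEnd ℂ) s := (ipA_conj A hA b x).symm
  have h1 : ipA A a v = 2 * s * ipA A a x - ipA A a b := ipA_smul_sub_right A a _ x b
  have h2 : ipA A v v = ipA A b b := by
    have e1 : ipA A v v = (starRingEnd ℂ) (2 * s) * (ipA A x v) - ipA A b v := by
      simp [hv, ipA, map_sub, map_smul, inner_sub_left, inner_smul_left, map_ofNat]; ring
    have e2 : ipA A x v = 2 * s * ipA A x x - ipA A x b := ipA_smul_sub_right A x _ x b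
    have e3 : ipA A b v = 2 * s * ipA A b x - ipA A b b := ipA_smul_sub_right A b _ x b
    rw [e1, e2, e3, hxx, hbx, ← hs]
    have h2s : (starRingEnd ℂ) ((2:ℂ) * s) = 2 * (starRingEnd ℂ) s := by
      rw [map_mul, Complex.conj_ofNat]
    rw [h2s]
    ring
  have hnv : nA A v = nA A b := by unfold nA; rw [h2]
  have h3 : ‖ipA A a v‖ ≤ nA A a * nA A b := by
    rw [← hnv]; exact abs_ipA_le A hA a v
  have h4 : ‖2 * s * ipA A a x‖ ≤
      ‖ipA A a v‖ + ‖ipA A a b‖ := by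
    have he : (2:ℂ) * s * ipA A a x = ipA A a v + ipA A a b := by rw [h1]; ring
    rw [he]
    exact norm_add_le _ _
  have h5 : ‖2 * s * ipA A a x‖ =
      2 * (‖ipA A a x‖ * ‖ipA A b x‖) := by
    rw [norm_mul, norm_mul]
    have habs : ‖s‖ = ‖ipA A b x‖ := by
      rw [hbx, Complex.norm_conj]
    rw [habs, Complex.norm_two]
    ring
  linarith [h5 ▸ h4, h3]

lemma boasbellman (hA : A.IsPositive) (a b x : H) (hx : nA A x = 1) :
    ‖ipA A a x‖ ^ 2 + ‖ipA A b x‖ ^ 2 ≤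
      max (nA A a ^ 2) (nA A b ^ 2) + ‖ipA A a b‖ := by
  set s : ℂ := ipA A a x with hs
  set t : ℂ := ipA A b x with ht
  set al : ℝ := ‖s‖ with hal
  set be : ℝ := ‖t‖ with hbe
  have hal0 : 0 ≤ al := norm_nonneg _
  have hbe0 : 0 ≤ be := norm_nonneg _
  have hRHS0 : 0 ≤ max (nA A a ^ 2) (nA A b ^ 2) + ‖ipA A a b‖ := by
    have h1 := sq_nonneg (nA A a)
    have h2 := norm_nonneg (ipA A a b)
    have h3 := le_max_left (nA A a ^ 2) (nA A b ^ 2)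
    linarith
  by_cases hz : al ^ 2 + be ^ 2 = 0
  · have h1 : al = 0 := by nlinarith
    have h2 : be = 0 := by nlinarith
    rw [h1, h2]
    simpa using hRHS0
  have hpos : 0 < al ^ 2 + be ^ 2 := lt_of_le_of_ne (by positivity) (Ne.symm hz)
  set w : H := s • a + t • b with hw
  have hwx : ipA A w x = ((al ^ 2 + be ^ 2 : ℝ) : ℂ) := by
    rw [hw, ipA_add_smul_left A s t a b x, ← hs, ← ht,
      normSq_conj_mul, normSq_conj_mul]
    push_cast
    ring
  have hle : al ^ 2 + be ^ 2 ≤ nA A w := by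
    have h1 : ‖ipA A w x‖ = al ^ 2 + be ^ 2 := by
      rw [hwx, Complex.norm_real, Real.norm_eq_abs, abs_of_nonneg (by positivity)]
    calc al ^ 2 + be ^ 2 = ‖ipA A w x‖ := h1.symm
    _ ≤ nA A w * nA A x := abs_ipA_le A hA w x
    _ = nA A w := by rw [hx, mul_one]
  have hww : ipA A w w = (starRingEnd ℂ) s * s * ipA A a a
      + ((starRingEnd ℂ) s * t * ipA A a b + (starRingEnd ℂ) t * s * ipA A b a)
      + (starRingEnd ℂ) t * t * ipA A b b := by
    rw [hw, ipA_add_smul_left A s t a b _]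
    have ea : ipA A a (s • a + t • b) = s * ipA A a a + t * ipA A a b := by
      simp [ipA, inner_add_right, inner_smul_right]
    have eb : ipA A b (s • a + t • b) = s * ipA A b a + t * ipA A b b := by
      simp [ipA, inner_add_right, inner_smul_right]
    rw [ea, eb]
    ring
  have hba : ipA A b a = (starRingEnd ℂ) (ipA A a b) := (ipA_conj A hA b a).symm
  have hcross : ((starRingEnd ℂ) s * t * ipA A a b + (starRingEnd ℂ) t * s * ipA A b a).re
      ≤ 2 * (al * be * ‖ipA A a b‖) := by
    set z : ℂ := (starRingEnd ℂ) s * t * ipA A a b with hzz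
    have hconj : (starRingEnd ℂ) t * s * ipA A b a = (starRingEnd ℂ) z := by
      rw [hzz, hba, map_mul, map_mul, Complex.conj_conj]
      ring
    rw [hconj]
    have hre2 : (z + (starRingEnd ℂ) z).re = 2 * z.re := by
      simp [Complex.add_re, Complex.conj_re]
      ring
    rw [hre2]
    have hzre : z.re ≤ ‖z‖ := Complex.re_le_norm z
    have hzabs : ‖z‖ = al * be * ‖ipA A a b‖ := by
      rw [hzz, norm_mul, norm_mul, Complex.norm_conj]
    linarith [hzabs ▸ hzre]
  have hreal : ∀ (r : ℝ) (zz : ℂ), (((r:ℂ)) * zz).re = r * zz.re := fun r zz => by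
    simp
  have hss : (starRingEnd ℂ) s * s = ((al ^ 2 : ℝ) : ℂ) := normSq_conj_mul s
  have htt : (starRingEnd ℂ) t * t = ((be ^ 2 : ℝ) : ℂ) := normSq_conj_mul t
  have hwwre : (ipA A w w).re ≤ al ^ 2 * nA A a ^ 2 + be ^ 2 * nA A b ^ 2
      + 2 * (al * be * ‖ipA A a b‖) := by
    rw [hww]
    simp only [Complex.add_re]
    rw [hss, htt, hreal, hreal, nA_sq A hA a, nA_sq A hA b]
    have hcross2 := hcross
    rw [Complex.add_re] at hcross2
    linarith
  have hw2 : nA A w ^ 2 ≤ (al ^ 2 + be ^ 2) *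
      (max (nA A a ^ 2) (nA A b ^ 2) + ‖ipA A a b‖) := by
    rw [nA_sq A hA w]
    have hma : nA A a ^ 2 ≤ max (nA A a ^ 2) (nA A b ^ 2) := le_max_left _ _
    have hmb : nA A b ^ 2 ≤ max (nA A a ^ 2) (nA A b ^ 2) := le_max_right _ _
    have h2ab : 2 * (al * be) ≤ al ^ 2 + be ^ 2 := by nlinarith [sq_nonneg (al - be)]
    have habs0 : 0 ≤ ‖ipA A a b‖ := norm_nonneg _
    nlinarith [hwwre, sq_nonneg al, sq_nonneg be]
  have hfin : (al ^ 2 + be ^ 2) * (al ^ 2 + be ^ 2) ≤ (al ^ 2 + be ^ 2) *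
      (max (nA A a ^ 2) (nA A b ^ 2) + ‖ipA A a b‖) := by
    have := pow_le_pow_left₀ (by positivity : (0:ℝ) ≤ al ^ 2 + be ^ 2) hle 2
    nlinarith [hw2]
  exact le_of_mul_le_mul_left hfin hpos

lemma ipA_add_left' (u v w : H) : ipA A (u + v) w = ipA A u w + ipA A v w := by
  simp [ipA, map_add, inner_add_left]

lemma ipA_sub_left' (u v w : H) : ipA A (u - v) w = ipA A u w - ipA A v w := by
  simp [ipA, map_sub, inner_sub_left]

lemma ipA_add_right' (u v w : H) : ipA A w (u + v) = ipA A w u + ipA A w v := by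
  simp [ipA, inner_add_right]

lemma ipA_sub_right' (u v w : H) : ipA A w (u - v) = ipA A w u - ipA A w v := by
  simp [ipA, inner_sub_right]
end


/-- The `A`-numerical radius. -/
noncomputable def wA (A T : H →L[ℂ] H) : ℝ :=
  sSup {c : ℝ | ∃ x : H, nA A x = 1 ∧ c = ‖ipA A (T x) x‖}

/-- The `A`-operator seminorm. -/
noncomputable def opA (A T : H →L[ℂ] H) : ℝ :=
  sSup {c : ℝ | ∃ x : H, nA A x = 1 ∧ c = nA A (T x)}

section
variable (A : H →L[ℂ] H)

lemma le_wA_gen (hA : A.IsPositive) (R Rs : H →L[ℂ] H)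
    (h : ∀ x y, ipA A (R x) y = ipA A x (Rs y)) (x : H) (hx : nA A x = 1) :
    ‖ipA A (R x) x‖ ≤ wA A R := by
  unfold wA
  apply le_csSup
  · refine ⟨Real.sqrt ‖Rs ∘L R‖, ?_⟩
    rintro c ⟨y, hy, rfl⟩
    exact abs_ipA_apply_le A hA R Rs h y hy
  · exact ⟨x, hx, rfl⟩

lemma le_opA_gen (hA : A.IsPositive) (R Rs : H →L[ℂ] H)
    (h : ∀ x y, ipA A (R x) y = ipA A x (Rs y)) (x : H) (hx : nA A x = 1) :
    nA A (R x) ≤ opA A R := by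
  unfold opA
  apply le_csSup
  · refine ⟨Real.sqrt ‖Rs ∘L R‖, ?_⟩
    rintro c ⟨y, hy, rfl⟩
    exact nA_comp_le A hA R Rs h y hy
  · exact ⟨x, hx, rfl⟩

lemma wA_nn (R : H →L[ℂ] H) : 0 ≤ wA A R := by
  apply Real.sSup_nonneg
  rintro c ⟨y, hy, rfl⟩
  exact norm_nonneg _

lemma opA_nn (R : H →L[ℂ] H) : 0 ≤ opA A R := by
  apply Real.sSup_nonneg
  rintro c ⟨y, hy, rfl⟩
  exact nA_nonneg A _
end


theorem stmt14 (A : H →L[ℂ] H) (hA : A.IsPositive) (T Ts S Ss : H →L[ℂ] H)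
    (hadjT : ∀ x y : H, ipA A (T x) y = ipA A x (Ts y))
    (hadjS : ∀ x y : H, ipA A (S x) y = ipA A x (Ss y)) :
    wA A (T + S) ^ 2 ≤
      (1 / 2) * (opA A (Ts ∘L T + Ss ∘L S) + opA A (Ts ∘L T - Ss ∘L S)) +
        Real.sqrt (wA A (Ts ∘L T) * wA A (Ss ∘L S)) + 2 * wA A (Ss ∘L T) := by
  have hT' : ∀ x y, ipA A (Ts x) y = ipA A x (T y) := ipA_adj_rev A hA T Ts hadjT
  have hS' : ∀ x y, ipA A (Ss x) y = ipA A x (S y) := ipA_adj_rev A hA S Ss hadjS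
  have hPadj : ∀ x y, ipA A ((Ts ∘L T) x) y = ipA A x ((Ts ∘L T) y) :=
    comp_selfadj A hA T Ts hadjT
  have hNadj : ∀ x y, ipA A ((Ss ∘L S) x) y = ipA A x ((Ss ∘L S) y) :=
    comp_selfadj A hA S Ss hadjS
  have hMadj : ∀ x y, ipA A ((Ss ∘L T) x) y = ipA A x ((Ts ∘L S) y) := by
    intro x y
    simp only [ContinuousLinearMap.comp_apply]
    rw [hS' (T x) y, hadjT x (S y)]
  have hUadj : ∀ x y, ipA A ((Ts ∘L T + Ss ∘L S) x) y = ipA A x ((Ts ∘L T + Ss ∘L S) y) := by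
    intro x y
    simp only [ContinuousLinearMap.add_apply]
    rw [ipA_add_left', ipA_add_right', hPadj, hNadj]
  have hVadj : ∀ x y, ipA A ((Ts ∘L T - Ss ∘L S) x) y = ipA A x ((Ts ∘L T - Ss ∘L S) y) := by
    intro x y
    simp only [ContinuousLinearMap.sub_apply]
    rw [ipA_sub_left', ipA_sub_right', hPadj, hNadj]
  set W : ℝ := (1 / 2) * (opA A (Ts ∘L T + Ss ∘L S) + opA A (Ts ∘L T - Ss ∘L S)) +
        Real.sqrt (wA A (Ts ∘L T) * wA A (Ss ∘L S)) + 2 * wA A (Ss ∘L T) with hW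
  have hW0 : 0 ≤ W := by
    rw [hW]
    have h1 := opA_nn A (Ts ∘L T + Ss ∘L S)
    have h2 := opA_nn A (Ts ∘L T - Ss ∘L S)
    have h3 := Real.sqrt_nonneg (wA A (Ts ∘L T) * wA A (Ss ∘L S))
    have h4 := wA_nn A (Ss ∘L T)
    linarith
  have key : ∀ x : H, nA A x = 1 → ‖ipA A ((T + S) x) x‖ ^ 2 ≤ W := by
    intro x hx
    have hbz := buzano A hA (T x) (S x) x hx
    have hbb := boasbellman A hA (T x) (S x) x hx
    have hpa : ipA A ((Ts ∘L T) x) x = ipA A (T x) (T x) := by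
      simp only [ContinuousLinearMap.comp_apply]
      exact hT' (T x) x
    have hqa : ipA A ((Ss ∘L S) x) x = ipA A (S x) (S x) := by
      simp only [ContinuousLinearMap.comp_apply]
      exact hS' (S x) x
    have hpa2 : nA A (T x) ^ 2 = (ipA A ((Ts ∘L T) x) x).re := by
      rw [nA_sq A hA, hpa]
    have hqa2 : nA A (S x) ^ 2 = (ipA A ((Ss ∘L S) x) x).re := by
      rw [nA_sq A hA, hqa]
    have hsum : nA A (T x) ^ 2 + nA A (S x) ^ 2 ≤ opA A (Ts ∘L T + Ss ∘L S) := by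
      have e : (ipA A ((Ts ∘L T + Ss ∘L S) x) x).re = nA A (T x) ^ 2 + nA A (S x) ^ 2 := by
        simp only [ContinuousLinearMap.add_apply]
        rw [ipA_add_left', Complex.add_re, hpa2, hqa2]
      calc nA A (T x) ^ 2 + nA A (S x) ^ 2 = (ipA A ((Ts ∘L T + Ss ∘L S) x) x).re := e.symm
      _ ≤ ‖ipA A ((Ts ∘L T + Ss ∘L S) x) x‖ := Complex.re_le_norm _
      _ ≤ nA A ((Ts ∘L T + Ss ∘L S) x) * nA A x := abs_ipA_le A hA _ _
      _ = nA A ((Ts ∘L T + Ss ∘L S) x) := by rw [hx, mul_one]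
      _ ≤ opA A (Ts ∘L T + Ss ∘L S) := le_opA_gen A hA _ _ hUadj x hx
    have hdiff : |nA A (T x) ^ 2 - nA A (S x) ^ 2| ≤ opA A (Ts ∘L T - Ss ∘L S) := by
      have e : (ipA A ((Ts ∘L T - Ss ∘L S) x) x).re = nA A (T x) ^ 2 - nA A (S x) ^ 2 := by
        simp only [ContinuousLinearMap.sub_apply]
        rw [ipA_sub_left', Complex.sub_re, hpa2, hqa2]
      calc |nA A (T x) ^ 2 - nA A (S x) ^ 2| = |(ipA A ((Ts ∘L T - Ss ∘L S) x) x).re| := by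
            rw [e]
      _ ≤ ‖ipA A ((Ts ∘L T - Ss ∘L S) x) x‖ := Complex.abs_re_le_norm _
      _ ≤ nA A ((Ts ∘L T - Ss ∘L S) x) * nA A x := abs_ipA_le A hA _ _
      _ = nA A ((Ts ∘L T - Ss ∘L S) x) := by rw [hx, mul_one]
      _ ≤ opA A (Ts ∘L T - Ss ∘L S) := le_opA_gen A hA _ _ hVadj x hx
    have hpm : nA A (T x) ^ 2 ≤ wA A (Ts ∘L T) := by
      calc nA A (T x) ^ 2 = (ipA A ((Ts ∘L T) x) x).re := hpa2
      _ ≤ ‖ipA A ((Ts ∘L T) x) x‖ := Complex.re_le_norm _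
      _ ≤ wA A (Ts ∘L T) := le_wA_gen A hA _ _ hPadj x hx
    have hqm : nA A (S x) ^ 2 ≤ wA A (Ss ∘L S) := by
      calc nA A (S x) ^ 2 = (ipA A ((Ss ∘L S) x) x).re := hqa2
      _ ≤ ‖ipA A ((Ss ∘L S) x) x‖ := Complex.re_le_norm _
      _ ≤ wA A (Ss ∘L S) := le_wA_gen A hA _ _ hNadj x hx
    have hab : ‖ipA A (T x) (S x)‖ ≤ wA A (Ss ∘L T) := by
      have e : ipA A ((Ss ∘L T) x) x = ipA A (T x) (S x) := by
        simp only [ContinuousLinearMap.comp_apply]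
        exact hS' (T x) x
      rw [← e]
      exact le_wA_gen A hA _ _ hMadj x hx
    have hpq : nA A (T x) * nA A (S x) ≤ Real.sqrt (wA A (Ts ∘L T) * wA A (Ss ∘L S)) := by
      have h1 : nA A (T x) * nA A (S x) = Real.sqrt ((nA A (T x) ^ 2) * (nA A (S x) ^ 2)) := by
        rw [Real.sqrt_mul (sq_nonneg _), Real.sqrt_sq (nA_nonneg A _),
          Real.sqrt_sq (nA_nonneg A _)]
      rw [h1]
      apply Real.sqrt_le_sqrt
      exact mul_le_mul hpm hqm (sq_nonneg _) (wA_nn A _)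
    have hmax : max (nA A (T x) ^ 2) (nA A (S x) ^ 2) ≤
        (opA A (Ts ∘L T + Ss ∘L S) + opA A (Ts ∘L T - Ss ∘L S)) / 2 := by
      obtain ⟨hd1, hd2⟩ := abs_le.mp hdiff
      rcases le_total (nA A (T x) ^ 2) (nA A (S x) ^ 2) with h | h
      · rw [max_eq_right h]; linarith
      · rw [max_eq_left h]; linarith
    have step1 : ‖ipA A ((T + S) x) x‖ ≤
        ‖ipA A (T x) x‖ + ‖ipA A (S x) x‖ := by
      have e : ipA A ((T + S) x) x = ipA A (T x) x + ipA A (S x) x := by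
        simp only [ContinuousLinearMap.add_apply]
        exact ipA_add_left' A _ _ _
      rw [e]
      exact norm_add_le _ _
    have h2 : (‖ipA A (T x) x‖ + ‖ipA A (S x) x‖) ^ 2 ≤
        max (nA A (T x) ^ 2) (nA A (S x) ^ 2) + nA A (T x) * nA A (S x) +
          2 * ‖ipA A (T x) (S x)‖ := by
      nlinarith [hbz, hbb, norm_nonneg (ipA A (T x) x), norm_nonneg (ipA A (S x) x)]
    calc ‖ipA A ((T + S) x) x‖ ^ 2
        ≤ (‖ipA A (T x) x‖ + ‖ipA A (S x) x‖) ^ 2 := by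
          apply pow_le_pow_left₀ (norm_nonneg _) step1
    _ ≤ max (nA A (T x) ^ 2) (nA A (S x) ^ 2) + nA A (T x) * nA A (S x) +
          2 * ‖ipA A (T x) (S x)‖ := h2
    _ ≤ W := by
        rw [hW]
        have := hmax
        have := hpq
        have := hab
        linarith
  have hsup : wA A (T + S) ≤ Real.sqrt W := by
    unfold wA
    apply Real.sSup_le
    · rintro c ⟨x, hx, rfl⟩
      have h := key x hx
      rw [← Real.sqrt_sq (norm_nonneg (ipA A ((T + S) x) x))]
      exact Real.sqrt_le_sqrt h
    · exact Real.sqrt_nonneg _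
  have h0 : 0 ≤ wA A (T + S) := wA_nn A _
  calc wA A (T + S) ^ 2 ≤ Real.sqrt W ^ 2 := pow_le_pow_left₀ h0 hsup 2
  _ = W := Real.sq_sqrt hW0
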